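/- Let L : ℕ → ℕ satisfy L₀ ≥ 25 and L_{k+1} = ⌊√(L_k)⌋ · L_k for all k ≥ 0. Then ∑_{k=0}^{∞} L_k^{−7/2} < 1. -/
import Mathlib


/-- Peierls estimate: for the scales `L_{k+1} = ⌊√L_k⌋ · L_k` with `L₀ ≥ 25`,
`∑_k L_k^{−7/2} < 1`. -/
theorem stmt_13 (L : ℕ → ℕ) (hL0 : 25 ≤ L 0)
    (hrec : ∀ k, L (k + 1) = Nat.sqrt (L k) * L k) :
    (∑' k : ℕ, (L k : ℝ) ^ (-(7 : ℝ) / 2)) < 1 := by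
  have hgrow : ∀ k, 5 ^ (k + 2) ≤ L k := by
    intro k
    induction k with
    | zero => simpa using hL0
    | succ n ih =>
      have h25 : 25 ≤ L n := le_trans (by nlinarith [pow_le_pow_right₀ (by norm_num : 1 ≤ 5) (Nat.le_add_left 2 n)] : (25:ℕ) ≤ 5 ^ (n + 2)) ih
      have hsqrt : 5 ≤ Nat.sqrt (L n) := by
        rw [Nat.le_sqrt']
        omega
      calc 5 ^ (n + 1 + 2) = 5 * 5 ^ (n + 2) := by ring
        _ ≤ Nat.sqrt (L n) * L n := Nat.mul_le_mul hsqrt ih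
        _ = L (n + 1) := (hrec n).symm
  have key : ∀ k : ℕ, (L k : ℝ) ^ (-(7 : ℝ) / 2) ≤ (5:ℝ) ^ (-(7:ℝ)) * (1/5 : ℝ) ^ k := by
    intro k
    have hpos : (0:ℝ) < (5:ℝ) ^ (k + 2 : ℕ) := by positivity
    have hle : ((5:ℝ) ^ (k + 2 : ℕ)) ≤ (L k : ℝ) := by
      exact_mod_cast Nat.cast_le.mpr (hgrow k)
    have h1 : (L k : ℝ) ^ (-(7 : ℝ) / 2) ≤ ((5:ℝ) ^ (k + 2 : ℕ)) ^ (-(7 : ℝ) / 2) :=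
      Real.rpow_le_rpow_of_nonpos hpos hle (by norm_num)
    have h2 : ((5:ℝ) ^ (k + 2 : ℕ)) ^ (-(7 : ℝ) / 2) = (5:ℝ) ^ (((k:ℝ) + 2) * (-(7:ℝ)/2)) := by
      rw [← Real.rpow_natCast (5:ℝ) (k + 2), ← Real.rpow_mul (by norm_num)]
      push_cast
      ring_nf
    have h3 : (5:ℝ) ^ (((k:ℝ) + 2) * (-(7:ℝ)/2)) ≤ (5:ℝ) ^ (-(7:ℝ) - k) := by
      apply Real.rpow_le_rpow_of_exponent_le (by norm_num)
      nlinarith [Nat.cast_nonneg (α := ℝ) k]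
    have h4 : (5:ℝ) ^ (-(7:ℝ) - k) = (5:ℝ) ^ (-(7:ℝ)) * (1/5 : ℝ) ^ k := by
      rw [sub_eq_add_neg, Real.rpow_add (by norm_num)]
      congr 1
      rw [one_div, ← Real.rpow_natCast (5:ℝ)⁻¹ k, Real.inv_rpow (by norm_num),
        ← Real.rpow_neg (by norm_num)]
    calc (L k : ℝ) ^ (-(7 : ℝ) / 2) ≤ ((5:ℝ) ^ (k + 2 : ℕ)) ^ (-(7 : ℝ) / 2) := h1
      _ = (5:ℝ) ^ (((k:ℝ) + 2) * (-(7:ℝ)/2)) := h2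
      _ ≤ (5:ℝ) ^ (-(7:ℝ) - k) := h3
      _ = (5:ℝ) ^ (-(7:ℝ)) * (1/5 : ℝ) ^ k := h4
  have hgsum : Summable (fun k : ℕ => (5:ℝ) ^ (-(7:ℝ)) * (1/5 : ℝ) ^ k) :=
    (summable_geometric_of_lt_one (by norm_num) (by norm_num)).mul_left _
  have hfsum : Summable (fun k : ℕ => (L k : ℝ) ^ (-(7 : ℝ) / 2)) := by
    apply Summable.of_nonneg_of_le (fun k => Real.rpow_nonneg (Nat.cast_nonneg _) _) key hgsum
  have hle := Summable.tsum_le_tsum key hfsum hgsum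
  have hg : (∑' k : ℕ, (5:ℝ) ^ (-(7:ℝ)) * (1/5 : ℝ) ^ k) = (5:ℝ) ^ (-(7:ℝ)) * (1 - 1/5)⁻¹ := by
    rw [tsum_mul_left, tsum_geometric_of_lt_one (by norm_num) (by norm_num)]
  have h5 : (5:ℝ) ^ (-(7:ℝ)) = 1/78125 := by
    rw [Real.rpow_neg (by norm_num), show (7:ℝ) = ((7:ℕ):ℝ) by norm_num, Real.rpow_natCast]
    norm_num
  calc (∑' k : ℕ, (L k : ℝ) ^ (-(7 : ℝ) / 2)) ≤ _ := hle
    _ = (5:ℝ) ^ (-(7:ℝ)) * (1 - 1/5)⁻¹ := hg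
    _ < 1 := by rw [h5]; norm_num
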